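/- Let n ≥ 2, s₀ > 0, C ≥ 0, and let τ̊ : (0, s₀] → ℝ be continuous with |τ̊(s) − (n−1)/s| ≤ C·s for all s ∈ (0, s₀]. Let R₁ ∈ [−∞, ∞), r₀ ∈ ℝ, let φ : (0, s₀] → (R₁, r₀] be a continuously differentiable bijection with φ′(s) > 0 for all s, and define τ : (R₁, r₀] → ℝ by τ(φ(s)) := τ̊(s)/φ′(s). If τ is bounded on (R₁, r₀], then R₁ = −∞. -/

import Mathlib

open Set Filter Topology

/-- Any parameterisation of a null generator (with vertex at affine parameter `s = 0`,
regular expansion `τ̊(s) = (n−1)/s + O(s)`) in which the transformed expansion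
`τ(φ(s)) = τ̊(s)/φ′(s)` is bounded forces the vertex to lie at parameter value `−∞`. -/
theorem bounded_expansion_forces_vertex_at_infinity (n : ℕ) (hn : 2 ≤ n)
    (s₀ C : ℝ) (hs₀ : 0 < s₀) (hC : 0 ≤ C)
    (τO : ℝ → ℝ) (hτOc : ContinuousOn τO (Ioc 0 s₀))
    (hτOb : ∀ s ∈ Ioc 0 s₀, |τO s - ((n:ℝ)-1)/s| ≤ C * s)
    (R₁ : EReal) (r₀ : ℝ) (hR₁ : R₁ < (r₀ : EReal))
    (J : Set ℝ) (hJ : J = {x : ℝ | R₁ < (x : EReal) ∧ x ≤ r₀})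
    (φ φ' : ℝ → ℝ)
    (hbij : Set.BijOn φ (Ioc 0 s₀) J)
    (hφ' : ∀ s ∈ Ioc 0 s₀, HasDerivWithinAt φ (φ' s) (Ioc 0 s₀) s)
    (hφ'c : ContinuousOn φ' (Ioc 0 s₀))
    (hφ'pos : ∀ s ∈ Ioc 0 s₀, 0 < φ' s)
    (τ : ℝ → ℝ) (hτ : ∀ s ∈ Ioc 0 s₀, τ (φ s) = τO s / φ' s)
    (hbound : ∃ M, ∀ x ∈ J, |τ x| ≤ M) :
    R₁ = ⊥ := by
  by_contra hbot
  -- R₁ is a real number `a`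
  have hne_top : R₁ ≠ ⊤ := ne_top_of_lt hR₁
  set a : ℝ := R₁.toReal with ha
  have hRa : (a : EReal) = R₁ := EReal.coe_toReal hne_top hbot
  obtain ⟨M, hM⟩ := hbound
  have hn1 : (1 : ℝ) ≤ (n : ℝ) - 1 := by
    have : (2 : ℝ) ≤ (n : ℝ) := by exact_mod_cast hn
    linarith
  -- choose s₁ small enough
  set s₁ : ℝ := min s₀ (Real.sqrt (((n:ℝ)-1) / (2*(C+1)))) with hs₁def
  have hsqrt_pos : 0 < Real.sqrt (((n:ℝ)-1) / (2*(C+1))) := by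
    apply Real.sqrt_pos.2
    positivity
  have hs₁pos : 0 < s₁ := lt_min hs₀ hsqrt_pos
  have hs₁le : s₁ ≤ s₀ := min_le_left _ _
  -- on (0, s₁], τO s ≥ (n-1)/(2s)
  have hτOlow : ∀ s ∈ Ioc (0:ℝ) s₁, ((n:ℝ)-1)/(2*s) ≤ τO s := by
    intro s hs
    have hs' : s ∈ Ioc (0:ℝ) s₀ := ⟨hs.1, hs.2.trans hs₁le⟩
    have hb := hτOb s hs'
    have h1 : ((n:ℝ)-1)/s - C*s ≤ τO s := by
      have := abs_le.1 hb
      linarith [this.1]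
    have hs2 : s ≤ Real.sqrt (((n:ℝ)-1) / (2*(C+1))) := hs.2.trans (min_le_right _ _)
    have hsq : s^2 ≤ ((n:ℝ)-1) / (2*(C+1)) := by
      have := Real.sq_sqrt (by positivity : (0:ℝ) ≤ ((n:ℝ)-1) / (2*(C+1)))
      nlinarith [hs.1.le]
    have hsne : s ≠ 0 := ne_of_gt hs.1
    have hCs : C * s ≤ ((n:ℝ)-1)/(2*s) := by
      rw [le_div_iff₀ (by positivity : (0:ℝ) < 2*(C+1))] at hsq
      rw [le_div_iff₀ (by linarith [hs.1] : (0:ℝ) < 2*s)]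
      nlinarith [hs.1]
    have hhalf : ((n:ℝ)-1)/s = 2*(((n:ℝ)-1)/(2*s)) := by
      field_simp
    linarith
  -- positivity of τO and the key derivative bound
  have hφmem : ∀ s ∈ Ioc (0:ℝ) s₀, φ s ∈ J := fun s hs => hbij.mapsTo hs
  have haJ : ∀ x ∈ J, a < x := by
    intro x hx
    rw [hJ] at hx
    have := hx.1
    rw [← hRa] at this
    exact_mod_cast this
  have hMpos : 0 < M := by
    have hs' : s₁ ∈ Ioc (0:ℝ) s₀ := ⟨hs₁pos, hs₁le⟩
    have hτpos : 0 < τ (φ s₁) := by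
      rw [hτ s₁ hs']
      have h1 := hτOlow s₁ ⟨hs₁pos, le_refl _⟩
      have h2 : 0 < ((n:ℝ)-1)/(2*s₁) := div_pos (by linarith) (by linarith)
      exact div_pos (lt_of_lt_of_le h2 h1) (hφ'pos s₁ hs')
    have := hM (φ s₁) (hφmem s₁ hs')
    calc 0 < τ (φ s₁) := hτpos
      _ ≤ |τ (φ s₁)| := le_abs_self _
      _ ≤ M := this
  set k : ℝ := ((n:ℝ)-1)/(2*M) with hk
  have hkpos : 0 < k := div_pos (by linarith) (by linarith)
  have hderiv_low : ∀ s ∈ Ioc (0:ℝ) s₁, k / s ≤ φ' s := by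
    intro s hs
    have hs' : s ∈ Ioc (0:ℝ) s₀ := ⟨hs.1, hs.2.trans hs₁le⟩
    have hp := hφ'pos s hs'
    have hτval := hτ s hs'
    have hle : τO s / φ' s ≤ M := by
      rw [← hτval]
      exact (le_abs_self _).trans (hM (φ s) (hφmem s hs'))
    have hτOp : 0 < τO s :=
      lt_of_lt_of_le (div_pos (by linarith) (by linarith [hs.1]) : (0:ℝ) < ((n:ℝ)-1)/(2*s)) (hτOlow s hs)
    have h1 : τO s ≤ M * φ' s := by
      rw [div_le_iff₀ hp] at hle; linarith
    have h2 : ((n:ℝ)-1)/(2*s) ≤ M * φ' s := (hτOlow s hs).trans h1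
    rw [div_le_iff₀ hs.1, hk]
    rw [div_le_iff₀ (by linarith [hs.1] : (0:ℝ) < 2*s)] at h2
    rw [div_le_iff₀ (by linarith : (0:ℝ) < 2*M)]
    nlinarith
  -- φ is continuous on Ioc 0 s₀
  have hφc : ContinuousOn φ (Ioc 0 s₀) := fun s hs => (hφ' s hs).continuousWithinAt
  -- key estimate: for ε ∈ (0, s₁], φ s₁ - φ ε ≥ k (log s₁ - log ε)
  have hkey : ∀ ε ∈ Ioc (0:ℝ) s₁, k * (Real.log s₁ - Real.log ε) ≤ φ s₁ - φ ε := by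
    intro ε hε
    set g : ℝ → ℝ := fun x => φ x - k * Real.log x with hg
    have hsub : Icc ε s₁ ⊆ Ioc 0 s₀ := fun x hx => ⟨lt_of_lt_of_le hε.1 hx.1, hx.2.trans hs₁le⟩
    have hmono : MonotoneOn g (Icc ε s₁) := by
      apply monotoneOn_of_hasDerivWithinAt_nonneg (f' := fun x => φ' x - k / x)
        (convex_Icc ε s₁)
      · exact (hφc.mono hsub).sub
          ((Real.continuousOn_log.mono (fun x hx => ne_of_gt (lt_of_lt_of_le hε.1 hx.1))).const_smul k)
      · intro x hx
        rw [interior_Icc] at hx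
        have hx' : x ∈ Ioc (0:ℝ) s₀ := hsub ⟨hx.1.le, hx.2.le⟩
        have h1 : HasDerivWithinAt φ (φ' x) (Ioo ε s₁) x :=
          (hφ' x hx').mono (fun y hy => hsub ⟨hy.1.le, hy.2.le⟩)
        have h2 : HasDerivWithinAt (fun y => k * Real.log y) (k * (1/x)) (Ioo ε s₁) x :=
          ((Real.hasDerivAt_log (ne_of_gt hx'.1)).hasDerivWithinAt.const_mul k).congr_deriv
            (by rw [one_div])
        rw [interior_Icc]
        have := h1.sub h2
        exact this.congr_deriv (by rw [mul_one_div])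
      · intro x hx
        rw [interior_Icc] at hx
        have := hderiv_low x ⟨lt_of_lt_of_le hε.1 hx.1.le, hx.2.le⟩
        linarith
    have := hmono ⟨le_refl _, hε.2⟩ ⟨hε.2, le_refl _⟩ hε.2
    simp only [hg] at this
    linarith
  -- now choose ε small enough to contradict φ ε > a
  set ε : ℝ := min s₁ (Real.exp ((a - φ s₁)/k + Real.log s₁ - 1)) with hε
  have hεpos : 0 < ε := lt_min hs₁pos (Real.exp_pos _)
  have hε1 : ε ∈ Ioc (0:ℝ) s₁ := ⟨hεpos, min_le_left _ _⟩
  have hlogε : Real.log ε ≤ (a - φ s₁)/k + Real.log s₁ - 1 := by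
    calc Real.log ε ≤ Real.log (Real.exp ((a - φ s₁)/k + Real.log s₁ - 1)) :=
          Real.log_le_log hεpos (min_le_right _ _)
      _ = _ := Real.log_exp _
  have h1 := hkey ε hε1
  have h2 : a < φ ε := haJ _ (hφmem ε ⟨hεpos, hε1.2.trans hs₁le⟩)
  have h3 : k * Real.log ε ≤ (a - φ s₁) + k * Real.log s₁ - k := by
    have := mul_le_mul_of_nonneg_left hlogε hkpos.le
    have hk' : k * ((a - φ s₁)/k) = a - φ s₁ := by field_simp
    nlinarith
  nlinarith
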